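/- For integers m,n ≥ 0, k ≥ 0 and real p, define G_p^{m,n,k}(x,y) := (1/k!) d^k/dt^k |_{t=0} ∫_0^{x+ty} s^m (1+tp+s)^n ds. Then G_p^{m,n,k}(x,y) is a polynomial in x and y, and for any differentiable function y(x) with y(0)=0 and x > 0, d/dx [G_p^{m,n,k}(x, y(x))] = x^m (1+x)^n · σ_k(y/x, …, y/x, (p+y)/(1+x), …, (p+y)/(1+x), y'), where y/x appears m times and (p+y)/(1+x) appears n times, and σ_k is the k-th elementary symmetric function on ℝ^{m+n+1}. -/

import Mathlib

open Polynomial Finset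

/-! ### Auxiliary polynomial machinery -/

noncomputable def AP (x y : ℝ) : Polynomial ℝ := C x + C y * X
noncomputable def BP (p x y : ℝ) : Polynomial ℝ := C (1+x) + C (p+y) * X

lemma coeffA (M r : ℕ) (x y : ℝ) :
    ((AP x y)^M).coeff r = (M.choose r : ℝ) * x^(M-r) * y^r := by
  have h : AP x y = C y * X + C x := by rw [AP]; ring
  rw [h, add_pow]
  rw [Polynomial.finset_sum_coeff]
  have hterm : ∀ i, ((C y * X) ^ i * C x ^ (M - i) * ((M.choose i : ℕ) : ℝ[X])).coeff r
      = if i = r then (M.choose i : ℝ) * x^(M-i) * y^i else 0 := by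
    intro i
    have : (C y * X) ^ i * C x ^ (M - i) * ((M.choose i : ℕ) : ℝ[X])
        = C (y ^ i * x ^ (M - i) * (M.choose i : ℝ)) * X ^ i := by
      simp only [C_mul, C_pow, ← Polynomial.C_eq_natCast, mul_pow]
      ring
    rw [this, coeff_C_mul, coeff_X_pow]
    rcases eq_or_ne r i with hir | hir
    · subst hir; simp; ring
    · simp [hir, Ne.symm hir]
  simp only [hterm]
  rw [Finset.sum_ite_eq' (Finset.range (M+1)) r]
  split_ifs with hr
  · rfl
  · rw [Finset.mem_range, not_lt] at hr
    rw [Nat.choose_eq_zero_of_lt (by omega)]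
    simp

lemma coeffXA (M j k : ℕ) (x y : ℝ) :
    (X^j * (AP x y)^M).coeff k
      = if j ≤ k then (M.choose (k-j) : ℝ) * x^(M-(k-j)) * y^(k-j) else 0 := by
  rw [mul_comm, Polynomial.coeff_mul_X_pow']
  split_ifs with h
  · exact coeffA M (k-j) x y
  · rfl

noncomputable def Q (m n k : ℕ) (p x y : ℝ) : Polynomial ℝ :=
  ∑ j ∈ Finset.range (n+1), ∑ b ∈ Finset.range (n-j+1),
    (((n.choose j : ℝ) * ((n-j).choose b : ℝ)) * p^j / (m+b+1 : ℝ)) •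
      (X^j * (AP x y)^(m+b+1))

lemma integrand_expand (m n : ℕ) (p t s : ℝ) :
    s^m * (1+t*p+s)^n = ∑ j ∈ Finset.range (n+1), ∑ b ∈ Finset.range (n-j+1),
      ((n.choose j : ℝ) * ((n-j).choose b : ℝ)) * (t*p)^j * s^(m+b) := by
  have h1 : (1:ℝ)+t*p+s = t*p + (1+s) := by ring
  rw [h1, add_pow, Finset.mul_sum]
  refine Finset.sum_congr rfl fun j hj => ?_
  have h2 : ((1:ℝ)+s)^(n-j) = ∑ b ∈ Finset.range (n-j+1),
      s^b * ((n-j).choose b : ℝ) := by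
    have := add_pow s 1 (n-j)
    simpa [add_comm] using this.symm ▸ by
      rw [add_comm s 1] at this
      simpa using this
  rw [h2]
  simp only [Finset.mul_sum, Finset.sum_mul]
  refine Finset.sum_congr rfl fun b hb => ?_
  rw [pow_add]; ring

lemma F_eval (m n k : ℕ) (p x y t : ℝ) :
    (∫ s in (0:ℝ)..(x + t * y), s ^ m * (1 + t * p + s) ^ n) = (Q m n k p x y).eval t := by
  have hint : ∀ (j b : ℕ), IntervalIntegrable
      (fun s : ℝ => ((n.choose j : ℝ) * ((n-j).choose b : ℝ)) * (t*p)^j * s^(m+b))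
      MeasureTheory.volume 0 (x + t*y) := by
    intro j b
    exact (Continuous.intervalIntegrable (by continuity) _ _)
  calc (∫ s in (0:ℝ)..(x + t * y), s ^ m * (1 + t * p + s) ^ n)
      = ∫ s in (0:ℝ)..(x + t * y), ∑ j ∈ Finset.range (n+1), ∑ b ∈ Finset.range (n-j+1),
          ((n.choose j : ℝ) * ((n-j).choose b : ℝ)) * (t*p)^j * s^(m+b) := by
        simp only [integrand_expand]
    _ = ∑ j ∈ Finset.range (n+1), ∑ b ∈ Finset.range (n-j+1),
          ∫ s in (0:ℝ)..(x + t * y),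
            ((n.choose j : ℝ) * ((n-j).choose b : ℝ)) * (t*p)^j * s^(m+b) := by
        rw [intervalIntegral.integral_finset_sum
          (fun j _ => Continuous.intervalIntegrable (by continuity) _ _)]
        exact Finset.sum_congr rfl fun j hj =>
          intervalIntegral.integral_finset_sum (fun b hb => hint j b)
    _ = (Q m n k p x y).eval t := by
        rw [Q]
        simp only [Polynomial.eval_finset_sum, Polynomial.eval_smul, Polynomial.eval_mul,
          Polynomial.eval_pow, Polynomial.eval_X, Polynomial.eval_add, Polynomial.eval_C,
          AP, smul_eq_mul]
        refine Finset.sum_congr rfl fun j hj => Finset.sum_congr rfl fun b hb => ?_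
        rw [intervalIntegral.integral_const_mul, integral_pow]
        have hM : ((m:ℝ) + b + 1) ≠ 0 := by positivity
        push_cast
        field_simp
        ring

lemma iteratedDeriv_polyeval (k : ℕ) (P : Polynomial ℝ) (x : ℝ) :
    iteratedDeriv k (fun t => P.eval t) x = (Polynomial.derivative^[k] P).eval x := by
  induction k generalizing P with
  | zero => simp
  | succ k ih =>
    rw [iteratedDeriv_succ', Function.iterate_succ_apply]
    have : deriv (fun t => P.eval t) = fun t => (Polynomial.derivative P).eval t := by
      funext t; exact Polynomial.deriv P
    rw [this, ih]

lemma iteratedDeriv_polyeval_zero (k : ℕ) (P : Polynomial ℝ) :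
    iteratedDeriv k (fun t => P.eval t) 0 / (Nat.factorial k : ℝ) = P.coeff k := by
  rw [iteratedDeriv_polyeval, ← Polynomial.coeff_zero_eq_eval_zero,
    Polynomial.coeff_iterate_derivative, zero_add, Nat.descFactorial_self, nsmul_eq_mul]
  field_simp [Nat.factorial_ne_zero]

/-! ### Combinatorial identities -/

lemma I1 (M r : ℕ) : (M - r) * M.choose r = M * (M-1).choose r := by
  cases M with
  | zero => simp
  | succ M' =>
    have h1 := Nat.choose_succ_right_eq (M'+1) r
    have h2 := Nat.add_one_mul_choose_eq M' r
    rw [Nat.add_sub_cancel]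
    calc (M'+1-r) * (M'+1).choose r = (M'+1).choose r * (M'+1-r) := Nat.mul_comm _ _
      _ = (M'+1).choose (r+1) * (r+1) := h1.symm
      _ = (M'+1) * M'.choose r := h2.symm

lemma I2 (M r : ℕ) (hr : 1 ≤ r) : r * M.choose r = M * (M-1).choose (r-1) := by
  cases M with
  | zero =>
    rcases Nat.exists_eq_add_of_le hr with ⟨r', rfl⟩
    simp [Nat.choose_eq_zero_of_lt (show 0 < 1+r' by omega)]
  | succ M' =>
    have h2 := Nat.add_one_mul_choose_eq M' (r-1)
    have hr1 : r - 1 + 1 = r := by omega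
    rw [hr1] at h2
    rw [Nat.add_sub_cancel]
    calc r * (M'+1).choose r = (M'+1).choose r * r := Nat.mul_comm _ _
      _ = (M'+1) * M'.choose (r-1) := h2.symm

lemma perterm (m b j k : ℕ) (c' x Y c : ℝ) :
    (if j ≤ k then (c' / ((m:ℝ)+b+1) * ((m+b+1).choose (k-j) : ℝ)) *
        ((↑(m+b+1-(k-j)) * x^(m+b+1-(k-j)-1) * Y^(k-j)
          + x^(m+b+1-(k-j)) * (↑(k-j) * Y^(k-j-1) * c))) else 0)
    = c' * ((if j ≤ k then (((m+b).choose (k-j):ℝ)) * x^((m+b)-(k-j)) * Y^(k-j) else 0)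
        + c * (if j+1 ≤ k then (((m+b).choose (k-(j+1)):ℝ)) * x^((m+b)-(k-(j+1)))
            * Y^(k-(j+1)) else 0)) := by
  have hM : ((m:ℝ)+b+1) ≠ 0 := by positivity
  by_cases hj : j ≤ k
  · simp only [if_pos hj]
    by_cases hjk : j = k
    · subst hjk
      rw [if_neg (by omega)]
      simp only [Nat.sub_self, pow_zero, Nat.choose_zero_right, Nat.cast_one,
        Nat.sub_zero, Nat.cast_zero, mul_one, mul_zero, add_zero, zero_mul, one_mul]
      have h1 : (m+b+1 : ℕ) - 1 = m + b := by omega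
      rw [h1]
      push_cast
      field_simp
    · have hjk' : j < k := lt_of_le_of_ne hj hjk
      have hr : 1 ≤ k - j := by omega
      simp only [if_pos (show j + 1 ≤ k by omega)]
      set r := k - j with hrdef
      have e1 : (m+b+1) - r - 1 = (m+b) - r := by omega
      have e2 : (m+b+1) - r = (m+b) - (r-1) := by omega
      have e3 : k - (j+1) = r - 1 := by omega
      have cast1 : ((m+b+1-r : ℕ) : ℝ) * (((m+b+1).choose r : ℕ) : ℝ)
          = ((m:ℝ)+b+1) * (((m+b).choose r : ℕ) : ℝ) := by
        have h := I1 (m+b+1) r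
        have h' : (m+b+1) - 1 = m+b := by omega
        rw [h'] at h
        exact_mod_cast congrArg (Nat.cast : ℕ → ℝ) h
      have cast2 : ((r:ℕ):ℝ) * (((m+b+1).choose r : ℕ):ℝ)
          = ((m:ℝ)+b+1) * (((m+b).choose (r-1) : ℕ):ℝ) := by
        have h := I2 (m+b+1) r hr
        have h' : (m+b+1) - 1 = m+b := by omega
        rw [h'] at h
        exact_mod_cast congrArg (Nat.cast : ℕ → ℝ) h
      rw [e1, e3, e2]
      rw [e2] at cast1
      rw [div_mul_eq_mul_div, div_mul_eq_mul_div, div_eq_iff hM]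
      linear_combination (c' * x^((m+b)-r) * Y^r) * cast1
        + (c' * c * x^((m+b)-(r-1)) * Y^(r-1)) * cast2
  · rw [if_neg hj, if_neg hj, if_neg (by omega : ¬ j + 1 ≤ k)]
    simp

lemma L1 (m n : ℕ) (p x y : ℝ) :
    ∑ j ∈ Finset.range (n+1), ∑ b ∈ Finset.range (n-j+1),
      (((n.choose j : ℝ) * ((n-j).choose b : ℝ)) * p^j) • (X^j * (AP x y)^(m+b))
    = (AP x y)^m * (BP p x y)^n := by
  have hB : BP p x y = C p * X + (1 + AP x y) := by
    rw [BP, AP, C_add, C_add, C_1]; ring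
  rw [hB, add_pow, Finset.mul_sum]
  refine Finset.sum_congr rfl fun j hj => ?_
  have h1A : ((1:ℝ[X]) + AP x y)^(n-j) = ∑ b ∈ Finset.range (n-j+1),
      (AP x y)^b * (((n-j).choose b : ℕ) : ℝ[X]) := by
    rw [add_comm, add_pow]
    simp
  rw [h1A]
  simp only [Finset.mul_sum, Finset.sum_mul]
  refine Finset.sum_congr rfl fun b hb => ?_
  rw [Polynomial.smul_eq_C_mul]
  simp only [C_mul, ← Polynomial.C_eq_natCast, ← C_pow, pow_add, mul_pow]
  ring

lemma coeff_ABc (m n k : ℕ) (p x Y c : ℝ) :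
    ((AP x Y)^m * (BP p x Y)^n * (1 + C c * X)).coeff k
    = ∑ j ∈ Finset.range (n+1), ∑ b ∈ Finset.range (n-j+1),
        (((n.choose j : ℝ) * ((n-j).choose b : ℝ)) * p^j) *
        ((if j ≤ k then (((m+b).choose (k-j):ℝ)) * x^((m+b)-(k-j)) * Y^(k-j) else 0)
         + c * (if j+1 ≤ k then (((m+b).choose (k-(j+1)):ℝ)) * x^((m+b)-(k-(j+1)))
             * Y^(k-(j+1)) else 0)) := by
  rw [← L1 m n p x Y, Finset.sum_mul, Polynomial.finset_sum_coeff]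
  refine Finset.sum_congr rfl fun j hj => ?_
  rw [Finset.sum_mul, Polynomial.finset_sum_coeff]
  refine Finset.sum_congr rfl fun b hb => ?_
  rw [smul_mul_assoc, Polynomial.coeff_smul, smul_eq_mul]
  congr 1
  have hexp : (X^j * (AP x Y)^(m+b)) * (1 + C c * X)
      = X^j * (AP x Y)^(m+b) + C c * (X^(j+1) * (AP x Y)^(m+b)) := by ring
  rw [hexp, Polynomial.coeff_add, Polynomial.coeff_C_mul, coeffXA, coeffXA]

/-! ### esymm via generating polynomial -/

noncomputable def esymm (n k : ℕ) (l : Fin n → ℝ) : ℝ :=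
  ∑ s ∈ Finset.powersetCard k (Finset.univ : Finset (Fin n)), ∏ i ∈ s, l i

lemma esymm_coeff (N k : ℕ) (l : Fin N → ℝ) :
    esymm N k l = (∏ i : Fin N, (1 + C (l i) * X)).coeff k := by
  have h : ∀ i : Fin N, (1:ℝ[X]) + C (l i) * X = C (l i) * X + 1 := fun i => by ring
  simp only [h]
  rw [Finset.prod_add]
  simp only [Finset.prod_const_one, mul_one]
  rw [Polynomial.finset_sum_coeff]
  have hterm : ∀ s : Finset (Fin N),
      (∏ i ∈ s, (C (l i) * X)).coeff k = if s.card = k then ∏ i ∈ s, l i else 0 := by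
    intro s
    rw [Finset.prod_mul_distrib, Finset.prod_const, ← map_prod, coeff_C_mul, coeff_X_pow]
    split_ifs with h1 h2 h2 <;> simp_all
  simp only [hterm]
  rw [esymm, Finset.powersetCard_eq_filter, Finset.sum_filter, Finset.powerset_univ]

lemma block_prod (m n : ℕ) (a b c : ℝ) :
    (∏ i : Fin (m+n+1),
        (1 + C ((if (i:ℕ) < m then a else if (i:ℕ) < m+n then b else c)) * X))
      = (1 + C a * X)^m * ((1 + C b * X)^n * (1 + C c * X)) := by
  set f : ℕ → ℝ[X] :=
    fun i => (1:ℝ[X]) + C ((if i < m then a else if i < m+n then b else c)) * X with hf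
  rw [Fin.prod_univ_eq_prod_range f (m+n+1), Finset.prod_range_succ, Finset.prod_range_add]
  have h1 : ∏ i ∈ Finset.range m, f i = (1 + C a * X)^m := by
    rw [Finset.prod_congr rfl (fun i hi => (?_ : f i = 1 + C a * X)), Finset.prod_const,
      Finset.card_range]
    rw [Finset.mem_range] at hi
    simp only [hf, if_pos hi]
  have h2 : ∏ i ∈ Finset.range n, f (m + i) = (1 + C b * X)^n := by
    rw [Finset.prod_congr rfl (fun i hi => (?_ : f (m+i) = 1 + C b * X)), Finset.prod_const,
      Finset.card_range]
    rw [Finset.mem_range] at hi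
    simp only [hf, if_neg (by omega : ¬ m + i < m), if_pos (by omega : m + i < m + n)]
  have h3 : f (m+n) = 1 + C c * X := by
    simp only [hf, if_neg (by omega : ¬ m + n < m), if_neg (by omega : ¬ m + n < m + n)]
  rw [h1, h2, h3]; ring

lemma scaleAB (m n k : ℕ) (p x Y c : ℝ) (hx : x ≠ 0) (hx1 : (1:ℝ)+x ≠ 0) :
    x^m * (1+x)^n *
      ((1 + C (Y/x) * X)^m * ((1 + C ((p+Y)/(1+x)) * X)^n * (1 + C c * X))).coeff k
    = ((AP x Y)^m * (BP p x Y)^n * (1 + C c * X)).coeff k := by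
  have hA : AP x Y = C x * (1 + C (Y/x) * X) := by
    rw [AP, mul_add, mul_one, ← mul_assoc, ← C_mul, mul_div_cancel₀ Y hx]
  have hB : BP p x Y = C (1+x) * (1 + C ((p+Y)/(1+x)) * X) := by
    rw [BP, mul_add, mul_one, ← mul_assoc, ← C_mul, mul_div_cancel₀ (p+Y) hx1]
  rw [hA, hB, mul_pow, mul_pow, ← C_pow, ← C_pow]
  rw [show C (x^m) * (1 + C (Y/x) * X)^m * (C ((1+x)^n) * (1 + C ((p+Y)/(1+x)) * X)^n)
        * (1 + C c * X)
      = C (x^m) * (C ((1+x)^n) * ((1 + C (Y/x) * X)^m *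
          ((1 + C ((p+Y)/(1+x)) * X)^n * (1 + C c * X)))) by ring]
  rw [coeff_C_mul, coeff_C_mul]
  ring

/-! ### The Fang–Lai polynomial -/

noncomputable def G (m n k : ℕ) (p x y : ℝ) : ℝ :=
  iteratedDeriv k (fun t => ∫ s in (0:ℝ)..(x + t * y), s ^ m * (1 + t * p + s) ^ n) 0
    / (Nat.factorial k : ℝ)

lemma G_formula (m n k : ℕ) (p x y : ℝ) :
    G m n k p x y = ∑ j ∈ Finset.range (n+1), ∑ b ∈ Finset.range (n-j+1),
      if j ≤ k then ((((n.choose j : ℝ) * ((n-j).choose b : ℝ)) * p^j) / ((m:ℝ)+b+1)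
          * ((m+b+1).choose (k-j) : ℝ)) * (x^(m+b+1-(k-j)) * y^(k-j)) else 0 := by
  have h : (fun t => ∫ s in (0:ℝ)..(x + t * y), s ^ m * (1 + t * p + s) ^ n)
      = fun t => (Q m n k p x y).eval t := funext fun t => F_eval m n k p x y t
  rw [G, h, iteratedDeriv_polyeval_zero, Q, Polynomial.finset_sum_coeff]
  refine Finset.sum_congr rfl fun j hj => ?_
  rw [Polynomial.finset_sum_coeff]
  refine Finset.sum_congr rfl fun b hb => ?_
  rw [Polynomial.coeff_smul, coeffXA, smul_eq_mul]
  split_ifs with hjk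
  · push_cast
    ring
  · simp

theorem G_polynomial_and_deriv (m n k : ℕ) (p : ℝ) :
    (∃ P : MvPolynomial (Fin 2) ℝ, ∀ x y : ℝ, G m n k p x y = MvPolynomial.eval ![x, y] P)
    ∧ ∀ y : ℝ → ℝ, Differentiable ℝ y → y 0 = 0 → ∀ x : ℝ, 0 < x →
        deriv (fun x => G m n k p x (y x)) x
          = x ^ m * (1 + x) ^ n *
            esymm (m + n + 1) k (fun i =>
              if (i : ℕ) < m then y x / x
              else if (i : ℕ) < m + n then (p + y x) / (1 + x)
              else deriv y x) := by
  constructor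
  · refine ⟨∑ j ∈ Finset.range (n+1), ∑ b ∈ Finset.range (n-j+1),
      if j ≤ k then MvPolynomial.C ((((n.choose j : ℝ) * ((n-j).choose b : ℝ)) * p^j)
          / ((m:ℝ)+b+1) * ((m+b+1).choose (k-j) : ℝ))
        * (MvPolynomial.X 0)^(m+b+1-(k-j)) * (MvPolynomial.X 1)^(k-j) else 0, ?_⟩
    intro x y
    rw [G_formula, map_sum]
    refine Finset.sum_congr rfl fun j hj => ?_
    rw [map_sum]
    refine Finset.sum_congr rfl fun b hb => ?_
    split_ifs with hjk
    · simp [Matrix.cons_val_zero, Matrix.cons_val_one]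
      ring
    · simp
  · intro y hy hy0 x hx
    have hx0 : x ≠ 0 := ne_of_gt hx
    have hx1 : (1:ℝ) + x ≠ 0 := by positivity
    set c := deriv y x with hc
    -- derivative of each term
    have key : ∀ (j b : ℕ), HasDerivAt
        (fun x' => if j ≤ k then ((((n.choose j : ℝ) * ((n-j).choose b : ℝ)) * p^j)
            / ((m:ℝ)+b+1) * ((m+b+1).choose (k-j) : ℝ))
            * (x'^(m+b+1-(k-j)) * (y x')^(k-j)) else 0)
        (if j ≤ k then ((((n.choose j : ℝ) * ((n-j).choose b : ℝ)) * p^j)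
            / ((m:ℝ)+b+1) * ((m+b+1).choose (k-j) : ℝ))
            * ((↑(m+b+1-(k-j)) * x^(m+b+1-(k-j)-1) * (y x)^(k-j)
              + x^(m+b+1-(k-j)) * (↑(k-j) * (y x)^(k-j-1) * c))) else 0) x := by
      intro j b
      by_cases hj : j ≤ k
      · simp only [if_pos hj]
        exact ((hasDerivAt_pow (m+b+1-(k-j)) x).mul
          (((hy x).hasDerivAt).pow (k-j))).const_mul _
      · simp only [if_neg hj]
        exact hasDerivAt_const x 0
    have hD : HasDerivAt (fun x' => G m n k p x' (y x'))
        (∑ j ∈ Finset.range (n+1), ∑ b ∈ Finset.range (n-j+1),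
          if j ≤ k then ((((n.choose j : ℝ) * ((n-j).choose b : ℝ)) * p^j)
            / ((m:ℝ)+b+1) * ((m+b+1).choose (k-j) : ℝ))
            * ((↑(m+b+1-(k-j)) * x^(m+b+1-(k-j)-1) * (y x)^(k-j)
              + x^(m+b+1-(k-j)) * (↑(k-j) * (y x)^(k-j-1) * c))) else 0) x := by
      have hfun : (fun x' => G m n k p x' (y x'))
          = fun x' => ∑ j ∈ Finset.range (n+1), ∑ b ∈ Finset.range (n-j+1),
            if j ≤ k then ((((n.choose j : ℝ) * ((n-j).choose b : ℝ)) * p^j)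
                / ((m:ℝ)+b+1) * ((m+b+1).choose (k-j) : ℝ))
                * (x'^(m+b+1-(k-j)) * (y x')^(k-j)) else 0 :=
        funext fun x' => G_formula m n k p x' (y x')
      rw [hfun]
      exact HasDerivAt.fun_sum fun j _ => HasDerivAt.fun_sum fun b _ => key j b
    rw [hD.deriv]
    -- identify the sum with a polynomial coefficient
    have step1 : (∑ j ∈ Finset.range (n+1), ∑ b ∈ Finset.range (n-j+1),
          if j ≤ k then ((((n.choose j : ℝ) * ((n-j).choose b : ℝ)) * p^j)
            / ((m:ℝ)+b+1) * ((m+b+1).choose (k-j) : ℝ))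
            * ((↑(m+b+1-(k-j)) * x^(m+b+1-(k-j)-1) * (y x)^(k-j)
              + x^(m+b+1-(k-j)) * (↑(k-j) * (y x)^(k-j-1) * c))) else 0)
        = ((AP x (y x))^m * (BP p x (y x))^n * (1 + C c * X)).coeff k := by
      rw [coeff_ABc]
      refine Finset.sum_congr rfl fun j hj => Finset.sum_congr rfl fun b hb => ?_
      exact perterm m b j k (((n.choose j : ℝ) * ((n-j).choose b : ℝ)) * p^j) x (y x) c
    rw [step1, ← scaleAB m n k p x (y x) c hx0 hx1]
    congr 1
    rw [esymm_coeff, block_prod]
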